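/- If ∘ is a commutative, associative binary operation on ℤ distributing over usual addition and possessing a two-sided identity element, then either ∘ equals the usual multiplication on ℤ, or n ∘ m = -(n · m) for all n, m. -/

import Mathlib

theorem stmt_5 (f : ℤ → ℤ → ℤ)
    (hcomm : ∀ n m : ℤ, f n m = f m n)
    (hassoc : ∀ n m k : ℤ, f (f n m) k = f n (f m k))
    (hdist : ∀ n m k : ℤ, f n (m + k) = f n m + f n k)
    (hunit : ∃ u : ℤ, ∀ n : ℤ, f u n = n) :
    (∀ n m : ℤ, f n m = n * m) ∨ (∀ n m : ℤ, f n m = -(n * m)) := by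
  have h0 : ∀ n : ℤ, f n 0 = 0 := by
    intro n
    have := hdist n 0 0
    simp at this
    omega
  have hlin : ∀ n m : ℤ, f n m = m * f n 1 := by
    intro n m
    induction m using Int.induction_on with
    | zero => simpa using h0 n
    | succ k ih => rw [hdist]; push_cast; ring_nf; rw [ih]; ring
    | pred k ih =>
        have := hdist n (-k) (-1)
        have h1 : f n (-1) = - f n 1 := by
          have := hdist n 1 (-1); simp at this
          have h0' := h0 n
          omega
        rw [show (-(k:ℤ) - 1) = -k + -1 by ring, hdist, ih, h1]; ring
  have key : ∀ n m : ℤ, f n m = n * m * f 1 1 := by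
    intro n m
    rw [hlin n m, hcomm n 1, hlin 1 n]; ring
  obtain ⟨u, hu⟩ := hunit
  have hu1 : u * f 1 1 = 1 := by
    have := hu 1
    rw [key] at this
    linarith
  have : f 1 1 = 1 ∨ f 1 1 = -1 :=
    Int.isUnit_iff.mp (IsUnit.of_mul_eq_one _ (by linarith [hu1] : f 1 1 * u = 1))
  rcases this with h | h
  · left; intro n m; rw [key, h]; ring
  · right; intro n m; rw [key, h]; ring
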